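/- Let 0 < r₀ < R, let f : ℝ → ℝ be differentiable with f'(x) > 0 for all x, and let (u₁, p₁) and (u₂, p₂) be two differentiable solutions on [r₀, R] of the system u' = p, p' = −p/r + f(u). If u₁(r₀) < u₂(r₀) and p₁(r₀) < p₂(r₀), then p₁(r) < p₂(r) and u₁(r) < u₂(r) for all r ∈ [r₀, R]. -/

import Mathlib

open Real Set

/-- Comparison lemma for the reduced slow flow `u' = p`, `p' = −p/r + f(u)`
with `f' > 0`: two solutions ordered at `r₀` (in both components) remain
strictly ordered on all of `[r₀, R]` (core of Lemma 3.6 of the paper). -/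
theorem slow_flow_comparison
    (r₀ R : ℝ) (hr₀ : 0 < r₀) (hR : r₀ < R)
    (f : ℝ → ℝ) (hf : Differentiable ℝ f) (hf' : ∀ x : ℝ, 0 < deriv f x)
    (u₁ p₁ u₂ p₂ : ℝ → ℝ)
    (hu₁ : ∀ r ∈ Set.Icc r₀ R, HasDerivAt u₁ (p₁ r) r)
    (hp₁ : ∀ r ∈ Set.Icc r₀ R, HasDerivAt p₁ (-(p₁ r)/r + f (u₁ r)) r)
    (hu₂ : ∀ r ∈ Set.Icc r₀ R, HasDerivAt u₂ (p₂ r) r)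
    (hp₂ : ∀ r ∈ Set.Icc r₀ R, HasDerivAt p₂ (-(p₂ r)/r + f (u₂ r)) r)
    (hu₀ : u₁ r₀ < u₂ r₀) (hp₀ : p₁ r₀ < p₂ r₀) :
    ∀ r ∈ Set.Icc r₀ R, p₁ r < p₂ r ∧ u₁ r < u₂ r := by
  set P : ℝ → ℝ := fun r => p₂ r - p₁ r with hPdef
  set U : ℝ → ℝ := fun r => u₂ r - u₁ r with hUdef
  have hfm : StrictMono f := strictMono_of_deriv_pos hf'
  have hPc : ContinuousOn P (Icc r₀ R) := fun r hr =>
    (((hp₂ r hr).sub (hp₁ r hr)).continuousAt).continuousWithinAt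
  have hUc : ContinuousOn U (Icc r₀ R) := fun r hr =>
    (((hu₂ r hr).sub (hu₁ r hr)).continuousAt).continuousWithinAt
  set S : Set ℝ := {r | r ∈ Icc r₀ R ∧ (P r ≤ 0 ∨ U r ≤ 0)} with hSdef
  have key : ∀ r ∈ Icc r₀ R, r ∉ S := by
    intro r hrI hrS
    -- S is nonempty, derive a contradiction
    have hne : S.Nonempty := ⟨r, hrS⟩
    have hSclosed : IsClosed S := by
      have hEq : S = (Icc r₀ R ∩ P ⁻¹' Iic 0) ∪ (Icc r₀ R ∩ U ⁻¹' Iic 0) := by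
        ext x
        simp only [hSdef, mem_setOf_eq, mem_union, mem_inter_iff, mem_preimage, mem_Iic,
          and_or_left]
      rw [hEq]
      exact (hPc.preimage_isClosed_of_isClosed isClosed_Icc isClosed_Iic).union
        (hUc.preimage_isClosed_of_isClosed isClosed_Icc isClosed_Iic)
    have hbdd : BddBelow S := ⟨r₀, fun x hx => hx.1.1⟩
    set s := sInf S with hsdef
    have hsS : s ∈ S := hSclosed.csInf_mem hne hbdd
    have hsI : s ∈ Icc r₀ R := hsS.1
    have hspos : 0 < s := lt_of_lt_of_le hr₀ hsI.1
    have hr₀S : r₀ ∉ S := by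
      rintro ⟨-, h | h⟩
      · simp only [hPdef] at h; linarith
      · simp only [hUdef] at h; linarith
    have hr₀s : r₀ < s := by
      rcases lt_or_eq_of_le hsI.1 with h | h
      · exact h
      · exact absurd (h ▸ hsS) hr₀S
    have hlt : ∀ x ∈ Ico r₀ s, 0 < P x ∧ 0 < U x := by
      intro x hx
      have hxI : x ∈ Icc r₀ R := ⟨hx.1, hx.2.le.trans hsI.2⟩
      have hxS : x ∉ S := fun h => absurd (csInf_le hbdd h) (not_le.2 hx.2)
      by_contra hcon
      exact hxS ⟨hxI, by
        rcases not_and_or.1 hcon with h | h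
        · exact Or.inl (le_of_not_gt h)
        · exact Or.inr (le_of_not_gt h)⟩
    -- U is monotone on [r₀, s], so U s ≥ U r₀ > 0
    have hUs : 0 < U s := by
      have hsub : Icc r₀ s ⊆ Icc r₀ R := Icc_subset_Icc le_rfl hsI.2
      have hmono : MonotoneOn U (Icc r₀ s) := by
        apply monotoneOn_of_deriv_nonneg (convex_Icc r₀ s) (hUc.mono hsub)
        · intro x hx
          rw [interior_Icc] at hx
          have hxI : x ∈ Icc r₀ R := hsub ⟨hx.1.le, hx.2.le⟩
          exact (((hu₂ x hxI).sub (hu₁ x hxI)).differentiableAt).differentiableWithinAt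
        · intro x hx
          rw [interior_Icc] at hx
          have hxI : x ∈ Icc r₀ R := hsub ⟨hx.1.le, hx.2.le⟩
          rw [show deriv U x = p₂ x - p₁ x from (((hu₂ x hxI).sub (hu₁ x hxI))).deriv]
          exact (hlt x ⟨hx.1.le, hx.2⟩).1.le
      have h0 : 0 < U r₀ := by simp only [hUdef]; linarith
      have := hmono (left_mem_Icc.2 hr₀s.le) (right_mem_Icc.2 hr₀s.le) hr₀s.le
      linarith
    have hPs : P s ≤ 0 := by
      rcases hsS.2 with h | h
      · exact h
      · linarith
    -- derivative of P at s is positive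
    have hd : HasDerivAt P ((-(p₂ s)/s + f (u₂ s)) - (-(p₁ s)/s + f (u₁ s))) s :=
      (hp₂ s hsI).sub (hp₁ s hsI)
    have hdpos : 0 < (-(p₂ s)/s + f (u₂ s)) - (-(p₁ s)/s + f (u₁ s)) := by
      have h1 : u₁ s < u₂ s := by simp only [hUdef] at hUs; linarith
      have h2 : f (u₁ s) < f (u₂ s) := hfm h1
      have h3 : p₂ s - p₁ s ≤ 0 := hPs
      have h4 : 0 ≤ (p₁ s - p₂ s) / s := div_nonneg (by linarith) hspos.le
      have : (-(p₂ s)/s + f (u₂ s)) - (-(p₁ s)/s + f (u₁ s))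
          = (p₁ s - p₂ s) / s + (f (u₂ s) - f (u₁ s)) := by ring
      rw [this]; linarith
    -- slope argument: find r' ∈ (r₀, s) with positive slope, contradiction
    have hslope : Filter.Tendsto (slope P s) (nhdsWithin s (Iio s))
        (nhds ((-(p₂ s)/s + f (u₂ s)) - (-(p₁ s)/s + f (u₁ s)))) :=
      (hasDerivAt_iff_tendsto_slope.1 hd).mono_left
        (nhdsWithin_mono s (fun x hx => ne_of_lt hx))
    have hev : ∀ᶠ x in nhdsWithin s (Iio s), 0 < slope P s x :=
      hslope.eventually (eventually_gt_nhds hdpos)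
    have hmem : Ioo r₀ s ∈ nhdsWithin s (Iio s) :=
      Ioo_mem_nhdsLT_of_mem ⟨hr₀s, le_rfl⟩
    obtain ⟨x, hx1, hx2⟩ := (hev.and (Filter.eventually_of_mem hmem fun _ h => h)).exists
    have hPx : 0 < P x := (hlt x ⟨hx2.1.le, hx2.2⟩).1
    have hsl : slope P s x = (P x - P s) / (x - s) := by
      rw [slope_def_field]
    have : slope P s x < 0 := by
      rw [hsl]
      exact div_neg_of_pos_of_neg (by linarith) (by linarith [hx2.2])
    linarith
  intro r hr
  have := key r hr
  simp only [hSdef, mem_setOf_eq, not_and, not_or, not_le] at this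
  have h := this hr
  constructor
  · have := h.1; simp only [hPdef] at this; linarith
  · have := h.2; simp only [hUdef] at this; linarith
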